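/- Let d ≥ 2 be an integer and (f_j)_{j≥0} a sequence of degree-d homogeneous lifts on E = ℂ^{k+1} for which there are constants C ≥ 1 and reals ε_j ≥ 0 with e^{−ε_j}·‖z‖^d ≤ ‖f_j(z)‖ ≤ C·‖z‖^d for all z ∈ E and all j, and ε_j/j → 0 as j → ∞. Then the functions G_n(z) := d^{−n}·log‖F_n(z)‖ converge, as n → ∞, uniformly on the unit sphere {z ∈ E : ‖z‖ = 1} to a continuous function G, and moreover G_n(z) converges for every z ∈ E with z ≠ 0. -/

import Mathlib

open Filter Metric

/-- Iterated compositions: `seqF f 0 = id`, `seqF f (n+1) = f n ∘ seqF f n`. -/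
def seqF {X : Type*} (f : ℕ → X → X) : ℕ → X → X
  | 0 => id
  | n + 1 => f n ∘ seqF f n

/-- Existence and continuity of the lifted Green function of a non-autonomous sequence of
degree-`d` homogeneous maps on `ℂ^{k+1}` satisfying the growth conditions (A) and (B):
`d^{-n} log‖F_n‖` converges uniformly on the unit sphere to a continuous function, and
converges at every nonzero point. -/
theorem green_function_exists
    (k : ℕ) (hk : 1 ≤ k) (d : ℕ) (hd : 2 ≤ d)
    (f : ℕ → EuclideanSpace ℂ (Fin (k + 1)) → EuclideanSpace ℂ (Fin (k + 1)))
    (hf_cont : ∀ j, Continuous (f j))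
    (hf_hom : ∀ j (c : ℂ) z, f j (c • z) = c ^ d • f j z)
    (C : ℝ) (hC : 1 ≤ C)
    (ε : ℕ → ℝ) (hε_nonneg : ∀ j, 0 ≤ ε j)
    (h_lower : ∀ j z, Real.exp (-ε j) * ‖z‖ ^ d ≤ ‖f j z‖)
    (h_upper : ∀ j z, ‖f j z‖ ≤ C * ‖z‖ ^ d)
    (hε : Tendsto (fun j : ℕ => ε j / j) atTop (nhds 0)) :
    ∃ G : EuclideanSpace ℂ (Fin (k + 1)) → ℝ,
      ContinuousOn G (sphere (0 : EuclideanSpace ℂ (Fin (k + 1))) 1) ∧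
      TendstoUniformlyOn
        (fun n z => Real.log ‖seqF f n z‖ / (d : ℝ) ^ n) G atTop
        (sphere (0 : EuclideanSpace ℂ (Fin (k + 1))) 1) ∧
      ∀ z, z ≠ 0 →
        Tendsto (fun n => Real.log ‖seqF f n z‖ / (d : ℝ) ^ n) atTop (nhds (G z)) := by
  have hd1 : (1 : ℝ) < (d : ℝ) := by
    have : (2 : ℝ) ≤ (d : ℝ) := by exact_mod_cast hd
    linarith
  have hdpos : (0 : ℝ) < (d : ℝ) := by linarith
  set u : ℕ → EuclideanSpace ℂ (Fin (k + 1)) → ℝ := fun n z => Real.log ‖seqF f n z‖ / (d : ℝ) ^ n with hu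
  -- positivity of norms along the orbit
  have hpos : ∀ z : EuclideanSpace ℂ (Fin (k + 1)), z ≠ 0 → ∀ n, 0 < ‖seqF f n z‖ := by
    intro z hz n
    induction n with
    | zero => simpa [seqF] using norm_pos_iff.mpr hz
    | succ n ih =>
      have h1 : (0 : ℝ) < Real.exp (-ε n) * ‖seqF f n z‖ ^ d := by positivity
      have h2 := h_lower n (seqF f n z)
      have h3 : seqF f (n + 1) z = f n (seqF f n z) := rfl
      rw [h3]
      linarith
  set L := Real.log C with hLdef
  have hL : 0 ≤ L := Real.log_nonneg hC
  set b : ℕ → ℝ := fun n => (ε n + L) / (d : ℝ) ^ (n + 1) with hbdef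
  have hb_nonneg : ∀ n, 0 ≤ b n := by
    intro n
    have := hε_nonneg n
    positivity
  -- the key telescoping estimate
  have key : ∀ z, z ≠ 0 → ∀ n, dist (u n z) (u (n + 1) z) ≤ b n := by
    intro z hz n
    have hw : 0 < ‖seqF f n z‖ := hpos z hz n
    have hfw : 0 < ‖f n (seqF f n z)‖ := hpos z hz (n + 1)
    set w := seqF f n z with hwdef
    have hup : Real.log ‖f n w‖ ≤ L + (d : ℝ) * Real.log ‖w‖ := by
      have h1 : ‖f n w‖ ≤ C * ‖w‖ ^ d := h_upper n w
      have h2 := Real.log_le_log hfw h1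
      rwa [Real.log_mul (by linarith) (by positivity), Real.log_pow] at h2
    have hlo : -ε n + (d : ℝ) * Real.log ‖w‖ ≤ Real.log ‖f n w‖ := by
      have h1 : Real.exp (-ε n) * ‖w‖ ^ d ≤ ‖f n w‖ := h_lower n w
      have h0 : (0 : ℝ) < Real.exp (-ε n) * ‖w‖ ^ d := by positivity
      have h2 := Real.log_le_log h0 h1
      rwa [Real.log_mul (Real.exp_pos _).ne' (by positivity), Real.log_exp,
        Real.log_pow] at h2
    have hDpos : (0 : ℝ) < (d : ℝ) ^ (n + 1) := by positivity
    have hdiff : u (n + 1) z - u n z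
        = (Real.log ‖f n w‖ - (d : ℝ) * Real.log ‖w‖) / (d : ℝ) ^ (n + 1) := by
      have hsucc : seqF f (n + 1) z = f n w := rfl
      simp only [hu, hsucc]
      rw [pow_succ]
      field_simp
      ring
    have habs : |Real.log ‖f n w‖ - (d : ℝ) * Real.log ‖w‖| ≤ ε n + L := by
      rw [abs_le]
      refine ⟨by linarith [hε_nonneg n], by linarith [hε_nonneg n]⟩
    rw [Real.dist_eq, abs_sub_comm, hdiff, abs_div, abs_of_pos hDpos]
    show _ ≤ (ε n + L) / (d : ℝ) ^ (n + 1)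
    gcongr
  -- summability of the bound
  obtain ⟨N, hN⟩ : ∃ N : ℕ, ∀ j ≥ N, ε j ≤ j := by
    have h1 : ∀ᶠ j : ℕ in atTop, ε j / j < 1 := hε.eventually (gt_mem_nhds one_pos)
    rw [eventually_atTop] at h1
    obtain ⟨N0, hN0⟩ := h1
    refine ⟨max N0 1, fun j hj => ?_⟩
    have hj1 : 1 ≤ j := le_trans (le_max_right _ _) hj
    have hjpos : (0 : ℝ) < (j : ℝ) := by exact_mod_cast hj1
    have := hN0 j (le_trans (le_max_left _ _) hj)
    have := (div_lt_one hjpos).mp this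
    linarith
  set c : ℝ := ∑ i ∈ Finset.range N, ε i with hcdef
  have hc_nonneg : 0 ≤ c := Finset.sum_nonneg fun i _ => hε_nonneg i
  have hεle : ∀ j, ε j ≤ c + j := by
    intro j
    by_cases hj : j < N
    · have h1 : ε j ≤ c := Finset.single_le_sum (fun i _ => hε_nonneg i)
        (Finset.mem_range.mpr hj)
      have : (0 : ℝ) ≤ (j : ℝ) := Nat.cast_nonneg j
      linarith
    · have := hN j (not_lt.mp hj)
      linarith
  have hr : ‖((d : ℝ))⁻¹‖ < 1 := by
    rw [norm_inv, Real.norm_eq_abs, abs_of_pos hdpos]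
    rw [inv_lt_one_iff₀]
    right; exact hd1
  have hSummableB : Summable b := by
    have h1 : Summable (fun j : ℕ => (j : ℝ) * ((d : ℝ)⁻¹) ^ j) := by
      have := summable_pow_mul_geometric_of_norm_lt_one (R := ℝ) 1 hr
      simpa using this
    have h2 : Summable (fun j : ℕ => (c + L) * ((d : ℝ)⁻¹) ^ j) :=
      (summable_geometric_of_norm_lt_one hr).mul_left _
    refine Summable.of_nonneg_of_le hb_nonneg (fun j => ?_) (h1.add h2)
    have hpow_le : (d : ℝ) ^ j ≤ (d : ℝ) ^ (j + 1) :=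
      pow_le_pow_right₀ (le_of_lt hd1) (Nat.le_succ j)
    have hpowpos : (0 : ℝ) < (d : ℝ) ^ j := by positivity
    have hpowpos' : (0 : ℝ) < (d : ℝ) ^ (j + 1) := by positivity
    have hnum : ε j + L ≤ (j : ℝ) + (c + L) := by have := hεle j; linarith
    have hnum0 : 0 ≤ ε j + L := by have := hε_nonneg j; linarith
    calc b j = (ε j + L) / (d : ℝ) ^ (j + 1) := rfl
      _ ≤ ((j : ℝ) + (c + L)) / (d : ℝ) ^ (j + 1) := by gcongr
      _ ≤ ((j : ℝ) + (c + L)) / (d : ℝ) ^ j := by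
          have hj0 : (0 : ℝ) ≤ (j : ℝ) := Nat.cast_nonneg j
          gcongr <;> linarith
      _ = (j : ℝ) * ((d : ℝ)⁻¹) ^ j + (c + L) * ((d : ℝ)⁻¹) ^ j := by
          rw [inv_pow, div_eq_mul_inv, add_mul]
  -- pointwise convergence
  have hcauchy : ∀ z, z ≠ 0 → CauchySeq (fun n => u n z) := fun z hz =>
    cauchySeq_of_dist_le_of_summable b (key z hz) hSummableB
  set G : EuclideanSpace ℂ (Fin (k + 1)) → ℝ := fun z => limUnder atTop (fun n => u n z) with hGdef
  have hptwise : ∀ z, z ≠ 0 → Tendsto (fun n => u n z) atTop (nhds (G z)) := by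
    intro z hz
    exact (hcauchy z hz).tendsto_limUnder
  -- distance to the limit is controlled by the tail of the series
  have htail : ∀ z, z ≠ 0 → ∀ n, dist (u n z) (G z) ≤ ∑' m, b (m + n) := by
    intro z hz n
    have h1 := dist_le_tsum_of_dist_le_of_tendsto b (key z hz) hSummableB (hptwise z hz) n
    refine h1.trans_eq ?_
    exact tsum_congr fun m => by rw [add_comm]
  have htail0 : Tendsto (fun n => ∑' m, b (m + n)) atTop (nhds 0) :=
    tendsto_sum_nat_add b
  -- uniform convergence on the sphere
  have hsphere_ne : ∀ z : EuclideanSpace ℂ (Fin (k + 1)), z ∈ sphere (0 : EuclideanSpace ℂ (Fin (k + 1))) 1 → z ≠ 0 := by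
    intro z hz
    rw [mem_sphere_zero_iff_norm] at hz
    intro h0
    rw [h0, norm_zero] at hz
    norm_num at hz
  have hunif : TendstoUniformlyOn u G atTop (sphere (0 : EuclideanSpace ℂ (Fin (k + 1))) 1) := by
    rw [Metric.tendstoUniformlyOn_iff]
    intro δ hδ
    have := htail0.eventually (gt_mem_nhds hδ)
    filter_upwards [this] with n hn z hz
    have h1 := htail z (hsphere_ne z hz) n
    rw [dist_comm]
    calc dist (u n z) (G z) ≤ ∑' m, b (m + n) := h1
      _ < δ := hn
  -- continuity of the limit on the sphere
  have hcontG : ContinuousOn G (sphere (0 : EuclideanSpace ℂ (Fin (k + 1))) 1) := by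
    apply hunif.continuousOn
    refine Eventually.frequently ?_
    filter_upwards with n
    intro z hz
    have hzne := hsphere_ne z hz
    have hseq_cont : Continuous (seqF f n) := by
      clear hz hzne
      induction n with
      | zero => exact continuous_id
      | succ m ih => exact (hf_cont m).comp ih
    have : ContinuousAt (fun z => u n z) z :=
      ((hseq_cont.norm.continuousAt.log (hpos z hzne n).ne').div_const _)
    exact this.continuousWithinAt
  exact ⟨G, hcontG, hunif, fun z hz => hptwise z hz⟩
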